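/- If a graph G has stcw(G) < r, then G does not contain as a weak immersion r^2 cycles intersecting at one common vertex which are otherwise pairwise vertex-disjoint. -/

import Mathlib

open scoped Classical

noncomputable section

namespace PaperSTCW

open SimpleGraph Finset

/-- Degree of a vertex in a multiset of edges over `Sym2 W`, loops counting twice. -/
def mdeg {W : Type} (E : Multiset (Sym2 W)) (v : W) : ℕ :=
  (E.map fun e => if e = Sym2.diag v then 2 else if v ∈ e then 1 else 0).sum

/-- Remove the edges incident to `v` and, if `lift = true` and `v` was incident to exactly
two non-loop edges, add the lifted edge between their other endpoints
(this is the edge replacement performed when suppressing a degree-2 vertex). -/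
def nextE {W : Type} (lift : Bool) (v : W) (E : Multiset (Sym2 W)) : Multiset (Sym2 W) :=
  E.filter (fun e => v ∉ e) +
    (if lift then
      (match (E.filter (fun e => v ∈ e)).toList.map
          (fun e => if hm : v ∈ e then Sym2.Mem.other hm else v) with
        | [a, b] => ({s(a, b)} : Multiset (Sym2 W))
        | _ => 0)
     else 0)

/-- Exhaustively delete (and, when `lift = true`, suppress) vertices outside `X` of degree
at most `d` from the multigraph with vertex set `S` and edge multiset `E`;
returns the surviving vertex set. -/
def reduce {W : Type} (X : Finset W) (d : ℕ) (lift : Bool)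
    (S : Finset W) (E : Multiset (Sym2 W)) : Finset W :=
  if h : ∃ v, v ∈ S ∧ v ∉ X ∧ mdeg E v ≤ d then
    reduce X d lift (S.erase h.choose) (nextE lift h.choose E)
  else S
termination_by S.card
decreasing_by exact Finset.card_erase_lt_of_mem h.choose_spec.1

/-- A tree-cut decomposition of `G`: a rooted tree together with a near-partition of the
vertices of `G` into bags (each vertex lies in exactly one bag; bags may be empty). -/
structure TCD {V : Type} [Fintype V] (G : SimpleGraph V) where
  n : ℕ
  T : SimpleGraph (Fin n)
  tree : T.IsTree
  root : Fin n
  bag : Fin n → Finset V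
  partition : ∀ v : V, ∃! t, v ∈ bag t

variable {V : Type} [Fintype V] {G : SimpleGraph V}

/-- The set of nodes in the subtree rooted at `t` (those nodes all of whose walks
from the root pass through `t`). -/
def TCD.desc (D : TCD G) (t : Fin D.n) : Set (Fin D.n) :=
  {s | ∀ p : D.T.Walk D.root s, t ∈ p.support}

/-- The union of the bags of the subtree rooted at `t`. -/
def TCD.Y (D : TCD G) (t : Fin D.n) : Finset V :=
  Finset.univ.filter fun v => ∃ s, s ∈ D.desc t ∧ v ∈ D.bag s

/-- Adhesion of a node: the number of edges of `G` with exactly one endpoint in `Y t`. -/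
def TCD.adh (D : TCD G) (t : Fin D.n) : ℕ :=
  ((Finset.univ : Finset (Sym2 V)).filter fun e =>
    e ∈ G.edgeSet ∧ ∃ a b, e = s(a, b) ∧ a ∈ D.Y t ∧ b ∉ D.Y t).card

/-- The connected components of `T - t`. -/
def TCD.Cmp (D : TCD G) (t : Fin D.n) : Type :=
  (SimpleGraph.induce {s | s ≠ t} D.T).ConnectedComponent

instance (D : TCD G) (t : Fin D.n) : Fintype (D.Cmp t) := by
  unfold TCD.Cmp; infer_instance

/-- The consolidation map of the torso at `t`: vertices of the bag of `t` are kept,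
all vertices in the bags of a fixed connected component of `T - t` are consolidated
into a single vertex. -/
def TCD.toTorso (D : TCD G) (t : Fin D.n) (v : V) : V ⊕ D.Cmp t :=
  if h : ∃ s, s ≠ t ∧ v ∈ D.bag s then
    Sum.inr ((SimpleGraph.induce {s | s ≠ t} D.T).connectedComponentMk
      ⟨h.choose, h.choose_spec.1⟩)
  else Sum.inl v

/-- Vertex set of the torso at `t`. -/
def TCD.torsoS (D : TCD G) (t : Fin D.n) : Finset (V ⊕ D.Cmp t) :=
  ((D.bag t).image Sum.inl) ∪ (Finset.univ.image Sum.inr)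

/-- Edge multiset of the torso at `t` (consolidation keeps multiplicities and drops loops). -/
def TCD.torsoE (D : TCD G) (t : Fin D.n) : Multiset (Sym2 (V ⊕ D.Cmp t)) :=
  (((Finset.univ : Finset (Sym2 V)).filter fun e => e ∈ G.edgeSet).val.map
      (Sym2.map (D.toTorso t))).filter fun e => ¬ e.IsDiag

/-- Torso-size: the order of the 3-center of the torso at `t`, obtained by exhaustively
suppressing vertices outside the bag of degree at most 2. -/
def TCD.tor (D : TCD G) (t : Fin D.n) : ℕ :=
  (reduce ((D.bag t).image Sum.inl) 2 true (D.torsoS t) (D.torsoE t)).card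

/-- The order of the 2-center of the torso at `t`, obtained by exhaustively deleting
vertices outside the bag of degree at most 1. -/
def TCD.tor2 (D : TCD G) (t : Fin D.n) : ℕ :=
  (reduce ((D.bag t).image Sum.inl) 1 false (D.torsoS t) (D.torsoE t)).card

/-- The order of the 1-center of the torso at `t`, obtained by deleting isolated
vertices outside the bag. -/
def TCD.tor1 (D : TCD G) (t : Fin D.n) : ℕ :=
  (reduce ((D.bag t).image Sum.inl) 0 false (D.torsoS t) (D.torsoE t)).card

/-- Width of a tree-cut decomposition. -/
def TCD.width (D : TCD G) : ℕ := Finset.univ.sup fun t => max (D.adh t) (D.tor t)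

/-- Slim width of a tree-cut decomposition. -/
def TCD.slimWidth (D : TCD G) : ℕ := Finset.univ.sup fun t => max (D.adh t) (D.tor2 t)

/-- 0-width of a tree-cut decomposition. -/
def TCD.zeroWidth (D : TCD G) : ℕ := Finset.univ.sup fun t => max (D.adh t) (D.tor1 t)

/-- Tree-cut width. -/
def tcw {V : Type} [Fintype V] (G : SimpleGraph V) : ℕ :=
  sInf {k | ∃ D : TCD G, D.width ≤ k}

/-- Slim tree-cut width. -/
def stcw {V : Type} [Fintype V] (G : SimpleGraph V) : ℕ :=
  sInf {k | ∃ D : TCD G, D.slimWidth ≤ k}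

/-- 0-tree-cut width. -/
def tcw0 {V : Type} [Fintype V] (G : SimpleGraph V) : ℕ :=
  sInf {k | ∃ D : TCD G, D.zeroWidth ≤ k}


/-! ### Bundled finite graphs and weak immersions -/

structure FG where
  V : Type
  [fin : Fintype V]
  G : SimpleGraph V

attribute [instance] FG.fin

/-- One step of obtaining a graph from another: an isomorphic copy, deleting an edge,
deleting a vertex, or lifting a pair of incident edges `(x,y), (y,z)` (deleting them
and adding the edge `(x,z)`). `ImmStep B A` means `B` is obtained from `A`. -/
inductive ImmStep : FG → FG → Prop
  | iso (A B : FG) : (Nonempty (B.G ≃g A.G)) → ImmStep B A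
  | delEdge (A : FG) (e : Sym2 A.V) (he : e ∈ A.G.edgeSet) :
      ImmStep (FG.mk A.V (A.G.deleteEdges {e})) A
  | delVertex (A : FG) (v : A.V) :
      ImmStep (FG.mk {w : A.V // w ≠ v} (SimpleGraph.induce {w : A.V | w ≠ v} A.G)) A
  | lift (A : FG) (x y z : A.V) (hxy : A.G.Adj x y) (hyz : A.G.Adj y z) (hxz : x ≠ z) :
      ImmStep (FG.mk A.V (SimpleGraph.fromEdgeSet
        ((A.G.edgeSet \ {s(x, y), s(y, z)}) ∪ {s(x, z)}))) A

/-- `Immersion H G` : `G` contains `H` as a weak immersion, i.e. `H` can be obtained from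
`G` by a sequence of edge deletions, vertex deletions and liftings. -/
def Immersion (H G : FG) : Prop := Relation.ReflTransGen ImmStep H G

/-- `H` consists of `m` cycles intersecting in one vertex and otherwise pairwise
vertex-disjoint. -/
def IsFlower (m : ℕ) {W : Type} [Fintype W] (H : SimpleGraph W) : Prop :=
  H.Connected ∧ ∃ c : W, H.degree c = 2 * m ∧ ∀ v : W, v ≠ c → H.degree v = 2

/-- `H` consists of `m` paths with the same two endpoints which are otherwise pairwise
vertex-disjoint. -/
def IsTheta (m : ℕ) {W : Type} [Fintype W] (H : SimpleGraph W) : Prop :=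
  H.Connected ∧ ∃ x y : W, x ≠ y ∧ H.degree x = m ∧ H.degree y = m ∧
    (∀ v : W, v ≠ x → v ≠ y → H.degree v = 2) ∧
    (SimpleGraph.induce {v : W | v ≠ x} H).IsAcyclic ∧
    (SimpleGraph.induce {v : W | v ≠ y} H).IsAcyclic

/-- The star `K_{1,r}`. -/
def star (r : ℕ) : SimpleGraph (Fin 1 ⊕ Fin r) := completeBipartiteGraph (Fin 1) (Fin r)

/-- The windmill `W_r`: `r` triangles sharing one vertex, otherwise vertex-disjoint. -/
def windmill (r : ℕ) : SimpleGraph (Option (Fin r × Fin 2)) :=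
  SimpleGraph.fromRel (fun x y =>
    x = none ∨ ∃ (i : Fin r) (a b : Fin 2), x = some (i, a) ∧ y = some (i, b))

/-- `G` is the `k`-edge sum `G₁ ⊕ₖ G₂` at vertices `v₁, v₂` of degree `k`. -/
def IsEdgeSum {V₁ V₂ : Type} [Fintype V₁] [Fintype V₂] (k : ℕ)
    (G₁ : SimpleGraph V₁) (G₂ : SimpleGraph V₂) (v₁ : V₁) (v₂ : V₂)
    (G : SimpleGraph ({x : V₁ // x ≠ v₁} ⊕ {y : V₂ // y ≠ v₂})) : Prop :=
  G₁.degree v₁ = k ∧ G₂.degree v₂ = k ∧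
  ∃ π : V₁ → V₂, Set.BijOn π (G₁.neighborSet v₁) (G₂.neighborSet v₂) ∧
    (∀ a b : {x : V₁ // x ≠ v₁}, G.Adj (Sum.inl a) (Sum.inl b) ↔ G₁.Adj a b) ∧
    (∀ a b : {y : V₂ // y ≠ v₂}, G.Adj (Sum.inr a) (Sum.inr b) ↔ G₂.Adj a b) ∧
    (∀ (a : {x : V₁ // x ≠ v₁}) (b : {y : V₂ // y ≠ v₂}),
      G.Adj (Sum.inl a) (Sum.inr b) ↔ (G₁.Adj v₁ a ∧ π (a : V₁) = (b : V₂)))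

/-! ### Treewidth and maximum degree -/

/-- A tree decomposition of `G`. -/
structure TreeDecomp {V : Type} [Fintype V] (G : SimpleGraph V) where
  n : ℕ
  T : SimpleGraph (Fin n)
  tree : T.IsTree
  bag : Fin n → Finset V
  cover_v : ∀ v : V, ∃ t, v ∈ bag t
  cover_e : ∀ u v : V, G.Adj u v → ∃ t, u ∈ bag t ∧ v ∈ bag t
  coherent : ∀ v : V, (SimpleGraph.induce {t : Fin n | v ∈ bag t} T).Connected

/-- Width of a tree decomposition: maximum bag size minus one. -/
def TreeDecomp.width (D : TreeDecomp G) : ℕ :=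
  (Finset.univ.sup fun t => (D.bag t).card) - 1

/-- Treewidth. -/
def tw {V : Type} [Fintype V] (G : SimpleGraph V) : ℕ :=
  sInf {w | ∃ D : TreeDecomp G, D.width ≤ w}

/-- Maximum degree. -/
def maxDeg {V : Type} [Fintype V] (G : SimpleGraph V) : ℕ :=
  Finset.univ.sup fun v => G.degree v

/-! ### Edge-cut width, super edge-cut width, feedback edge number -/

/-- `T` is a maximal spanning forest of `G`. -/
def IsMSF {V : Type} (G T : SimpleGraph V) : Prop :=
  T ≤ G ∧ T.IsAcyclic ∧ ∀ u v : V, G.Adj u v → T.Reachable u v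

/-- The size of the local feedback edge set at `v`: edges of `G` outside `T` whose unique
`T`-path between their endpoints contains `v`. -/
def elocCard {V : Type} [Fintype V] (G T : SimpleGraph V) (v : V) : ℕ :=
  ((Finset.univ : Finset (Sym2 V)).filter fun e =>
    e ∈ G.edgeSet ∧ e ∉ T.edgeSet ∧
      ∃ a b : V, e = s(a, b) ∧ ∃ p : T.Walk a b, p.IsPath ∧ v ∈ p.support).card

/-- Edge-cut width of a pair `(G, T)`. -/
def ecwPair {V : Type} [Fintype V] (G T : SimpleGraph V) : ℕ :=
  1 + Finset.univ.sup fun v => elocCard G T v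

/-- Edge-cut width. -/
def ecw {V : Type} [Fintype V] (G : SimpleGraph V) : ℕ :=
  sInf {k | ∃ T : SimpleGraph V, IsMSF G T ∧ ecwPair G T ≤ k}

/-- Super edge-cut width: minimum edge-cut width over all supergraphs of `G`. -/
def secw {V : Type} [Fintype V] (G : SimpleGraph V) : ℕ :=
  sInf {k | ∃ (W : Type) (fW : Fintype W) (H : SimpleGraph W) (ι : V ↪ W),
    (∀ u v : V, G.Adj u v → H.Adj (ι u) (ι v)) ∧
    ∃ T : SimpleGraph W, IsMSF H T ∧ @ecwPair W fW H T ≤ k}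

/-- Feedback edge number: minimum number of edges whose deletion makes `G` a forest. -/
def fen {V : Type} [Fintype V] (G : SimpleGraph V) : ℕ :=
  sInf {m | ∃ F : Finset (Sym2 V), ↑F ⊆ G.edgeSet ∧ F.card = m ∧
    (G.deleteEdges ↑F).IsAcyclic}

/-! ### Nice decompositions -/

/-- The children of `t` in the rooted tree of `D`. -/
def TCD.children (D : TCD G) (t : Fin D.n) : Finset (Fin D.n) :=
  Finset.univ.filter fun s => D.T.Adj t s ∧ s ∈ D.desc t

/-- The neighborhood of a vertex set `S` in `G`. -/
def nbhd {V : Type} [Fintype V] (G : SimpleGraph V) (S : Finset V) : Finset V :=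
  Finset.univ.filter fun v => v ∉ S ∧ ∃ u ∈ S, G.Adj u v

/-- A non-root node is thin if its adhesion is at most 2. -/
def TCD.IsThin (D : TCD G) (t : Fin D.n) : Prop := t ≠ D.root ∧ D.adh t ≤ 2

/-- A tree-cut decomposition is nice if for every thin node `t`, `N(Y_t)` avoids the
sets `Y_b` of all siblings `b` of `t`. -/
def TCD.IsNice (D : TCD G) : Prop :=
  ∀ t : Fin D.n, D.IsThin t →
    ∀ p b : Fin D.n, t ∈ D.children p → b ∈ D.children p → b ≠ t →
      ∀ v ∈ nbhd G (D.Y t), v ∉ D.Y b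

/-- `B_t`: the thin children `b` of `t` with `|N(Y_b)| ≤ 2` and `N(Y_b) ⊆ X_t`. -/
def TCD.B (D : TCD G) (t : Fin D.n) : Finset (Fin D.n) :=
  (D.children t).filter fun b => (nbhd G (D.Y b)).card ≤ 2 ∧ nbhd G (D.Y b) ⊆ D.bag t

/-- `B_t^{(2)}`: the members of `B_t` of adhesion exactly 2. -/
def TCD.B2 (D : TCD G) (t : Fin D.n) : Finset (Fin D.n) :=
  (D.B t).filter fun b => D.adh b = 2

end PaperSTCW

namespace PaperSTCW

/-! ### Auxiliary lemmas -/

lemma msum_mono {s t : Multiset ℕ} (h : s ≤ t) : s.sum ≤ t.sum := by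
  obtain ⟨u, rfl⟩ := Multiset.le_iff_exists_add.mp h
  simp

lemma mdeg_mono {W : Type} {E F : Multiset (Sym2 W)} (h : E ≤ F) (v : W) :
    mdeg E v ≤ mdeg F v :=
  msum_mono (Multiset.map_le_map h)

lemma mdeg_pos_of_mem {W : Type} {E : Multiset (Sym2 W)} {e : Sym2 W} {w : W}
    (he : e ∈ E) (hw : w ∈ e) : 1 ≤ mdeg E w := by
  have h1 : ({e} : Multiset (Sym2 W)) ≤ E := Multiset.singleton_le.mpr he
  refine le_trans ?_ (mdeg_mono h1 w)
  unfold mdeg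
  simp only [Multiset.map_singleton, Multiset.sum_singleton]
  split <;> simp [hw]

lemma nextE_false {W : Type} (v : W) (E : Multiset (Sym2 W)) :
    nextE false v E = E.filter (fun e => v ∉ e) := by
  simp [nextE]

lemma reduce_keeps {W : Type} (X A : Finset W) (F' : Multiset (Sym2 W))
    (hA : ∀ a ∈ A, 2 ≤ mdeg F' a) (hend : ∀ e ∈ F', ∀ w ∈ e, w ∈ A ∨ w ∈ X) :
    ∀ (S : Finset W) (E : Multiset (Sym2 W)), F' ≤ E →
      ∀ u ∈ S, (u ∈ A ∨ u ∈ X) → u ∈ reduce X 1 false S E := by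
  intro S
  induction S using Finset.strongInduction with
  | _ S ih =>
    intro E hF u hu hAX
    rw [reduce]
    split
    · next h =>
      obtain ⟨hcS, hcX, hcd⟩ := h.choose_spec
      have hcA : h.choose ∉ A := fun hca => by
        have h1 := hA _ hca
        have h2 := mdeg_mono hF h.choose
        omega
      have hcu : u ≠ h.choose := by
        rintro rfl
        rcases hAX with h' | h'
        · exact hcA h'
        · exact hcX h'
      refine ih _ (Finset.erase_ssubset hcS) _ ?_ u (Finset.mem_erase.mpr ⟨hcu, hu⟩) hAX
      rw [nextE_false, Multiset.le_filter]
      refine ⟨hF, fun e he hce => ?_⟩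
      rcases hend e he _ hce with h' | h'
      · exact hcA h'
      · exact hcX h'
    · exact hu

/-! ### Generic walk lemmas -/

lemma end_eq_of_mem_takeUntil {α : Type} [DecidableEq α] {T : SimpleGraph α} {a b c : α}
    (p : T.Walk a b) (hp : p.IsPath) (hc : c ∈ p.support)
    (hb : b ∈ (p.takeUntil c hc).support) : b = c := by
  have hnd : p.support.Nodup := hp.support_nodup
  conv at hnd => rw [← p.take_spec hc]
  rw [SimpleGraph.Walk.support_append] at hnd
  have hbd : b ∈ (p.dropUntil c hc).support := SimpleGraph.Walk.end_mem_support _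
  rw [SimpleGraph.Walk.support_eq_cons (p.dropUntil c hc)] at hbd
  rcases List.mem_cons.mp hbd with h | h
  · exact h
  · exact (((List.nodup_append'.mp hnd).2.2) hb h).elim

lemma walk_to_induce {α : Type} {T : SimpleGraph α} {t : α} :
    ∀ {u w : α} (p : T.Walk u w) (hu : u ≠ t) (hw : w ≠ t), t ∉ p.support →
      (SimpleGraph.induce {s : α | s ≠ t} T).Reachable ⟨u, hu⟩ ⟨w, hw⟩ := by
  intro u w p
  induction p with
  | nil => intro hu hw _; rfl
  | @cons a x c h q ih =>
    intro hu hw hs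
    have hx : x ≠ t := by
      intro hxt
      exact hs (by rw [SimpleGraph.Walk.support_cons]; exact List.mem_cons_of_mem _ (hxt ▸ q.start_mem_support))
    have ht' : t ∉ q.support := fun h' => hs (by rw [SimpleGraph.Walk.support_cons]; exact List.mem_cons_of_mem _ h')
    have hadj : (SimpleGraph.induce {s : α | s ≠ t} T).Adj ⟨a, hu⟩ ⟨x, hx⟩ := h
    exact (hadj.reachable).trans (ih hx hw ht')

lemma walk_of_induce {α : Type} {T : SimpleGraph α} {t : α} {u w : {s : α | s ≠ t}}
    (h : (SimpleGraph.induce {s : α | s ≠ t} T).Reachable u w) :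
    ∃ p : T.Walk u.1 w.1, t ∉ p.support := by
  obtain ⟨q⟩ := h
  refine ⟨q.map (SimpleGraph.Embedding.induce {s : α | s ≠ t}).toHom, ?_⟩
  intro ht
  have ht2 : t ∈ (q.map (SimpleGraph.Embedding.induce {s : α | s ≠ t}).toHom).support := ht
  rw [SimpleGraph.Walk.support_map] at ht2
  obtain ⟨x, _, hx⟩ := List.mem_map.mp ht2
  exact x.2 hx

section TreeLemmas

variable {V : Type} [Fintype V] {G : SimpleGraph V}

/-- Connectivity avoiding `t` in the tree of a decomposition. -/
def Avoids (D : TCD G) (t u w : Fin D.n) : Prop :=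
  ∃ p : D.T.Walk u w, t ∉ p.support

lemma Avoids.symm {D : TCD G} {t u w : Fin D.n} (h : Avoids D t u w) : Avoids D t w u := by
  obtain ⟨p, hp⟩ := h
  exact ⟨p.reverse, by rwa [SimpleGraph.Walk.support_reverse, List.mem_reverse]⟩

lemma Avoids.trans {D : TCD G} {t u w x : Fin D.n} (h : Avoids D t u w)
    (h' : Avoids D t w x) : Avoids D t u x := by
  obtain ⟨p, hp⟩ := h
  obtain ⟨q, hq⟩ := h'
  exact ⟨p.append q, fun hh => by
    rcases (SimpleGraph.Walk.mem_support_append_iff _ _).mp hh with h | h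
    · exact hp h
    · exact hq h⟩

lemma mem_desc_self (D : TCD G) (t : Fin D.n) : t ∈ D.desc t :=
  fun p => p.end_mem_support

lemma not_mem_desc_iff {D : TCD G} {t s : Fin D.n} :
    s ∉ D.desc t ↔ ∃ p : D.T.Walk D.root s, t ∉ p.support := by
  simp only [TCD.desc, Set.mem_setOf_eq, not_forall]

lemma not_mem_desc_of_mem_desc {D : TCD G} {t c : Fin D.n} (hct : c ≠ t)
    (hcd : c ∈ D.desc t) : t ∉ D.desc c := by
  obtain ⟨Pt, hPt, _⟩ := D.tree.existsUnique_path D.root t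
  intro htd
  have hc : c ∈ Pt.support := htd Pt
  have ht' : t ∈ (Pt.takeUntil c hc).support := hcd (Pt.takeUntil c hc)
  exact hct.symm (end_eq_of_mem_takeUntil Pt hPt hc ht')

lemma desc_subset_desc {D : TCD G} {t c : Fin D.n} (hcd : c ∈ D.desc t) :
    D.desc c ⊆ D.desc t := by
  intro s hs W
  have hcW : c ∈ W.support := hs W
  exact SimpleGraph.Walk.support_takeUntil_subset W hcW (hcd (W.takeUntil c hcW))

/-- From any walk from the root to `s ≠ t` passing through `t`, extract the gate
neighbor of `t` towards `s`. -/
lemma exists_gate {D : TCD G} {t s : Fin D.n} (hs : s ≠ t) (W : D.T.Walk D.root s)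
    (ht : t ∈ W.support) :
    ∃ c, D.T.Adj t c ∧ Avoids D t c s ∧ c ∈ W.support := by
  have ht' : t ∈ W.reverse.support := by rwa [SimpleGraph.Walk.support_reverse, List.mem_reverse]
  have hcount := SimpleGraph.Walk.count_support_takeUntil_eq_one W.reverse ht'
  set W2 := W.reverse.takeUntil t ht' with hW2
  have hsub : ∀ x, x ∈ W2.support → x ∈ W.support := fun x hx => by
    have := SimpleGraph.Walk.support_takeUntil_subset W.reverse ht' hx
    rwa [SimpleGraph.Walk.support_reverse, List.mem_reverse] at this
  have hRcount : List.count t W2.reverse.support = 1 := by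
    rw [SimpleGraph.Walk.support_reverse, List.count_reverse]; exact hcount
  have hsub' : ∀ x, x ∈ W2.reverse.support → x ∈ W.support := fun x hx => by
    rw [SimpleGraph.Walk.support_reverse, List.mem_reverse] at hx
    exact hsub x hx
  revert hRcount hsub'
  cases hR : W2.reverse with
  | nil => intro _ _; exact absurd rfl hs.symm
  | @cons a c s' h q =>
    intro hRcount hsub'
    rw [SimpleGraph.Walk.support_cons, List.count_cons_self] at hRcount
    have hq : t ∉ q.support := by
      intro hh
      have h0 : 0 < List.count t q.support := List.count_pos_iff.mpr hh
      omega
    refine ⟨c, h, ⟨q, hq⟩, hsub' c ?_⟩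
    rw [SimpleGraph.Walk.support_cons]
    exact List.mem_cons_of_mem _ q.start_mem_support

/-- Two distinct neighbors of `t` in the tree are not connected avoiding `t`. -/
lemma gate_unique {D : TCD G} {t c c' : Fin D.n} (h1 : D.T.Adj t c) (h2 : D.T.Adj t c')
    (hne : c ≠ c') (hav : Avoids D t c c') : False := by
  obtain ⟨p, hp⟩ := hav
  have hq : (SimpleGraph.Walk.cons h1.symm (SimpleGraph.Walk.cons h2 SimpleGraph.Walk.nil)).IsPath := by
    rw [SimpleGraph.Walk.isPath_def]
    simp [h1.ne', hne, h2.ne]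
  have huniq := SimpleGraph.isAcyclic_iff_path_unique.mp D.tree.IsAcyclic
    p.toPath ⟨_, hq⟩
  have hts : t ∈ (p.toPath : D.T.Walk c c').support := by
    rw [huniq]
    simp [SimpleGraph.Walk.support_cons]
  exact hp (SimpleGraph.Walk.support_toPath_subset p hts)

lemma exists_gate_of_desc {D : TCD G} {t s : Fin D.n} (hs : s ≠ t) (hd : s ∈ D.desc t) :
    ∃ c, D.T.Adj t c ∧ Avoids D t c s ∧ c ∈ D.desc t ∧ t ∉ D.desc c := by
  obtain ⟨P, hP, _⟩ := D.tree.existsUnique_path D.root s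
  have ht : t ∈ P.support := hd P
  have hQ : (P.dropUntil t ht).IsPath := hP.dropUntil ht
  revert hQ
  cases hdrop : P.dropUntil t ht with
  | nil => intro _; exact absurd rfl hs.symm
  | @cons a c s' h q =>
    intro hQ
    rw [SimpleGraph.Walk.cons_isPath_iff] at hQ
    have hav : Avoids D t c s := ⟨q, hQ.2⟩
    have hcd : c ∈ D.desc t := by
      intro W
      by_contra hnt
      obtain ⟨q2, hq2⟩ := hav
      have := hd (W.append q2)
      rcases (SimpleGraph.Walk.mem_support_append_iff _ _).mp this with h' | h'
      · exact hnt h'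
      · exact hq2 h'
    exact ⟨c, h, hav, hcd, not_mem_desc_of_mem_desc h.ne' hcd⟩

/-- Characterization of the `t`-avoiding connectivity class of `s₀` when `s₀ ∈ desc t`. -/
lemma class_of_desc {D : TCD G} {t s₀ : Fin D.n} (hs₀ : s₀ ≠ t) (hd : s₀ ∈ D.desc t) :
    ∃ c, D.T.Adj t c ∧ t ∉ D.desc c ∧
      ∀ s, s ≠ t → (Avoids D t s s₀ ↔ s ∈ D.desc c) := by
  obtain ⟨c, hadj, hav, hcdt, hctd⟩ := exists_gate_of_desc hs₀ hd
  refine ⟨c, hadj, hctd, fun s hs => ⟨?_, ?_⟩⟩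
  · rintro havs
    have hsd : s ∈ D.desc t := by
      by_contra hnot
      obtain ⟨W0, hW0⟩ := not_mem_desc_iff.mp hnot
      obtain ⟨p, hp⟩ := havs
      have := hd (W0.append p)
      rcases (SimpleGraph.Walk.mem_support_append_iff _ _).mp this with h' | h'
      · exact hW0 h'
      · exact hp h'
    intro W
    obtain ⟨c'', hadj'', hav'', hmem⟩ := exists_gate hs W (hsd W)
    by_cases hcc : c'' = c
    · exact hcc ▸ hmem
    · exact absurd (hav''.trans (havs.trans hav.symm)) (fun hh => gate_unique hadj'' hadj hcc hh)
  · intro hsdc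
    have hsd : s ∈ D.desc t := desc_subset_desc hcdt hsdc
    obtain ⟨c₂, hadj₂, hav₂, _, _⟩ := exists_gate_of_desc hs hsd
    by_cases hc₂c : c₂ = c
    · exact hav₂.symm.trans (hc₂c ▸ hav)
    · exfalso
      obtain ⟨W1, hW1⟩ := not_mem_desc_iff.mp hctd
      obtain ⟨p₂, hp₂⟩ := hav₂
      have hcp₂ : c ∉ p₂.support := by
        intro hc
        exact gate_unique hadj₂ hadj hc₂c
          ⟨p₂.takeUntil c hc, fun ht' => hp₂ (SimpleGraph.Walk.support_takeUntil_subset _ _ ht')⟩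
      have hcW : c ∈ (W1.append (SimpleGraph.Walk.cons hadj₂ p₂)).support := hsdc _
      rcases (SimpleGraph.Walk.mem_support_append_iff _ _).mp hcW with h' | h'
      · exact hW1 h'
      · rw [SimpleGraph.Walk.support_cons] at h'
        rcases List.mem_cons.mp h' with h'' | h''
        · exact hadj.ne' h''
        · exact hcp₂ h''

/-- Characterization of the `t`-avoiding connectivity class of `s₀` when `s₀ ∉ desc t`. -/
lemma class_of_not_desc {D : TCD G} {t s₀ : Fin D.n} (hs₀ : s₀ ∉ D.desc t) :
    ∀ s, s ≠ t → (Avoids D t s s₀ ↔ s ∉ D.desc t) := by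
  intro s _
  constructor
  · rintro ⟨p, hp⟩
    obtain ⟨W0, hW0⟩ := not_mem_desc_iff.mp hs₀
    refine not_mem_desc_iff.mpr ⟨W0.append p.reverse, fun hh => ?_⟩
    rcases (SimpleGraph.Walk.mem_support_append_iff _ _).mp hh with h' | h'
    · exact hW0 h'
    · rw [SimpleGraph.Walk.support_reverse, List.mem_reverse] at h'
      exact hp h'
  · intro hsd
    obtain ⟨W0, hW0⟩ := not_mem_desc_iff.mp hs₀
    obtain ⟨Ws, hWs⟩ := not_mem_desc_iff.mp hsd
    refine ⟨Ws.reverse.append W0, fun hh => ?_⟩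
    rcases (SimpleGraph.Walk.mem_support_append_iff _ _).mp hh with h' | h'
    · rw [SimpleGraph.Walk.support_reverse, List.mem_reverse] at h'
      exact hWs h'
    · exact hW0 h'

lemma avoids_iff_reachable {D : TCD G} {t u w : Fin D.n} (hu : u ≠ t) (hw : w ≠ t) :
    Avoids D t u w ↔
      (SimpleGraph.induce {s : Fin D.n | s ≠ t} D.T).Reachable ⟨u, hu⟩ ⟨w, hw⟩ := by
  constructor
  · rintro ⟨p, hp⟩
    exact walk_to_induce p hu hw hp
  · intro h
    exact walk_of_induce h

end TreeLemmas

section TorsoLemmas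

variable {V : Type} [Fintype V] {G : SimpleGraph V}

lemma bag_unique {D : TCD G} {u : V} {s s' : Fin D.n}
    (h : u ∈ D.bag s) (h' : u ∈ D.bag s') : s = s' := by
  obtain ⟨w, _, huniq⟩ := D.partition u
  rw [huniq s h, huniq s' h']

lemma toTorso_of_mem_bag {D : TCD G} {t : Fin D.n} {u : V} (hu : u ∈ D.bag t) :
    D.toTorso t u = Sum.inl u := by
  unfold TCD.toTorso
  rw [dif_neg]
  rintro ⟨s, hs, hbs⟩
  exact hs (bag_unique hbs hu)

lemma toTorso_of_not_mem_bag {D : TCD G} {t : Fin D.n} {u : V} (hu : u ∉ D.bag t) :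
    ∃ (s : Fin D.n) (hs : s ≠ t), u ∈ D.bag s ∧
      D.toTorso t u = Sum.inr ((SimpleGraph.induce {s : Fin D.n | s ≠ t} D.T).connectedComponentMk
        ⟨s, hs⟩) := by
  obtain ⟨s', hbs', _⟩ := D.partition u
  have hex : ∃ s, s ≠ t ∧ u ∈ D.bag s := ⟨s', fun h => hu (h ▸ hbs'), hbs'⟩
  refine ⟨hex.choose, hex.choose_spec.1, hex.choose_spec.2, ?_⟩
  unfold TCD.toTorso
  rw [dif_pos hex]
  rfl

lemma mem_Y_iff {D : TCD G} {c : Fin D.n} {u : V} {s : Fin D.n} (hu : u ∈ D.bag s) :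
    u ∈ D.Y c ↔ s ∈ D.desc c := by
  simp only [TCD.Y, Finset.mem_filter, Finset.mem_univ, true_and]
  constructor
  · rintro ⟨s', hs', hb'⟩
    rwa [bag_unique hu hb']
  · intro h
    exact ⟨s, h, hu⟩

/-- Every consolidation class of the torso is either the `Y`-set of some node, or
the complement of `Y t`. -/
lemma class_eq {D : TCD G} (t : Fin D.n) (C : D.Cmp t) :
    (∃ c : Fin D.n, (∀ u : V, (D.toTorso t u = Sum.inr C ↔ u ∈ D.Y c)) ∧
       (∀ u ∈ D.bag t, u ∉ D.Y c))
    ∨ (∀ u : V, D.toTorso t u = Sum.inr C ↔ u ∉ D.Y t) := by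
  obtain ⟨⟨s₀, hs₀⟩, hC⟩ := (C : (SimpleGraph.induce {s : Fin D.n | s ≠ t} D.T).ConnectedComponent).exists_rep
  have hs₀t : s₀ ≠ t := hs₀
  by_cases hdes : s₀ ∈ D.desc t
  · obtain ⟨c, hadj, hctd, hchar⟩ := class_of_desc hs₀t hdes
    refine Or.inl ⟨c, fun u => ?_, fun u hub => ?_⟩
    · constructor
      · intro h
        have hub : u ∉ D.bag t := by
          intro hub
          rw [toTorso_of_mem_bag hub] at h
          exact Sum.inl_ne_inr h
        obtain ⟨s, hs, hbs, heq⟩ := toTorso_of_not_mem_bag hub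
        rw [heq] at h
        have hmk := Sum.inr.inj h
        rw [← hC] at hmk
        have hreach := SimpleGraph.ConnectedComponent.eq.mp hmk
        have hav : Avoids D t s s₀ := (avoids_iff_reachable hs hs₀t).mpr hreach
        exact (mem_Y_iff hbs).mpr ((hchar s hs).mp hav)
      · intro hY
        obtain ⟨s, hbs, _⟩ := D.partition u
        have hsdc : s ∈ D.desc c := (mem_Y_iff hbs).mp hY
        have hst : s ≠ t := fun h => hctd (h ▸ hsdc)
        have hub : u ∉ D.bag t := fun hub => hst (bag_unique hbs hub)
        obtain ⟨s', hs', hbs', heq⟩ := toTorso_of_not_mem_bag hub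
        have hss' : s' = s := bag_unique hbs' hbs
        subst hss'
        rw [heq, ← hC]
        congr 1
        exact SimpleGraph.ConnectedComponent.eq.mpr
          ((avoids_iff_reachable hs' hs₀t).mp ((hchar s' hs').mpr hsdc))
    · intro hY
      exact hctd ((mem_Y_iff hub).mp hY)
  · have hchar := class_of_not_desc hdes
    refine Or.inr fun u => ⟨?_, ?_⟩
    · intro h
      have hub : u ∉ D.bag t := by
        intro hub
        rw [toTorso_of_mem_bag hub] at h
        exact Sum.inl_ne_inr h
      obtain ⟨s, hs, hbs, heq⟩ := toTorso_of_not_mem_bag hub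
      rw [heq] at h
      have hmk := Sum.inr.inj h
      rw [← hC] at hmk
      have hav : Avoids D t s s₀ :=
        (avoids_iff_reachable hs hs₀t).mpr (SimpleGraph.ConnectedComponent.eq.mp hmk)
      intro hY
      exact ((hchar s hs).mp hav) ((mem_Y_iff hbs).mp hY)
    · intro hY
      obtain ⟨s, hbs, _⟩ := D.partition u
      have hsd : s ∉ D.desc t := fun h => hY ((mem_Y_iff hbs).mpr h)
      have hst : s ≠ t := fun h => hsd (h ▸ mem_desc_self D t)
      have hub : u ∉ D.bag t := fun hub => hst (bag_unique hbs hub)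
      obtain ⟨s', hs', hbs', heq⟩ := toTorso_of_not_mem_bag hub
      have hss' : s' = s := bag_unique hbs' hbs
      subst hss'
      rw [heq, ← hC]
      congr 1
      exact SimpleGraph.ConnectedComponent.eq.mpr
        ((avoids_iff_reachable hs' hs₀t).mp ((hchar s' hs').mpr hsd))

end TorsoLemmas

section Parity

lemma mdeg_add {W : Type} (E E' : Multiset (Sym2 W)) (v : W) :
    mdeg (E + E') v = mdeg E v + mdeg E' v := by
  simp [mdeg]

lemma mdeg_filter_map {α β : Type} (g : Sym2 α → Sym2 β) (s : Multiset (Sym2 α)) (a : β) :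
    mdeg ((s.map g).filter (fun e => ¬ e.IsDiag)) a
      = (s.map (fun e => if ¬(g e).IsDiag ∧ a ∈ g e then 1 else 0)).sum := by
  induction s using Multiset.induction_on with
  | empty => simp [mdeg]
  | cons x s ih =>
    rw [Multiset.map_cons, Multiset.filter_cons, mdeg_add, Multiset.map_cons,
      Multiset.sum_cons, ← ih]
    congr 1
    by_cases h : (g x).IsDiag
    · simp [h, mdeg]
    · have hne : g x ≠ Sym2.diag a := fun hh => h (hh ▸ Sym2.diag_isDiag a)
      by_cases hm : a ∈ g x <;> simp [h, hm, mdeg, hne]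

lemma even_mdeg_FE {W T2 : Type} [Fintype W]
    (τ : W → T2) (F : Finset (Sym2 W)) (hF : ∀ e ∈ F, ¬ e.IsDiag)
    (heven : ∀ w : W, Even ((F.filter (fun e => w ∈ e)).card)) (a : T2) :
    Even (mdeg ((F.val.map (Sym2.map τ)).filter (fun e => ¬ e.IsDiag)) a) := by
  rw [mdeg_filter_map]
  have hsum : (F.val.map (fun e => if ¬(Sym2.map τ e).IsDiag ∧ a ∈ Sym2.map τ e then 1 else 0)).sum
      = ∑ e ∈ F, (if ¬(Sym2.map τ e).IsDiag ∧ a ∈ Sym2.map τ e then 1 else 0) := rfl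
  rw [hsum]
  have key : ∀ e ∈ F, Even ((if ¬(Sym2.map τ e).IsDiag ∧ a ∈ Sym2.map τ e then 1 else 0)
      + ∑ u : W, if τ u = a ∧ u ∈ e then 1 else 0) := by
    intro e he
    have hnd := hF e he
    clear he
    induction e using Sym2.inductionOn with
    | _ x y =>
      have hxy : x ≠ y := fun h => hnd (Sym2.mk_isDiag_iff.mpr h)
      have hsum2 : (∑ u : W, if τ u = a ∧ u ∈ s(x,y) then 1 else 0)
          = (if τ x = a then 1 else 0) + (if τ y = a then 1 else 0) := by
        have hpt : ∀ u : W, (if τ u = a ∧ u ∈ s(x,y) then 1 else 0)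
            = (if u = x then (if τ x = a then 1 else 0) else 0)
              + (if u = y then (if τ y = a then 1 else 0) else 0) := by
          intro u
          by_cases h1 : u = x
          · subst h1
            rw [if_pos rfl, if_neg hxy]
            have hm : u ∈ s(u, y) := Sym2.mem_iff.mpr (Or.inl rfl)
            by_cases h3 : τ u = a
            · rw [if_pos ⟨h3, hm⟩, if_pos h3]
            · rw [if_neg (fun hc => h3 hc.1), if_neg h3]
          · by_cases h2 : u = y
            · subst h2
              rw [if_neg h1, if_pos rfl]
              have hm : u ∈ s(x, u) := Sym2.mem_iff.mpr (Or.inr rfl)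
              by_cases h3 : τ u = a
              · rw [if_pos ⟨h3, hm⟩, if_pos h3]
              · rw [if_neg (fun hc => h3 hc.1), if_neg h3]
            · rw [if_neg h1, if_neg h2]
              have hm : u ∉ s(x,y) := fun h => (Sym2.mem_iff.mp h).elim h1 h2
              rw [if_neg (fun hc => hm hc.2)]
        rw [Finset.sum_congr rfl (fun u _ => hpt u), Finset.sum_add_distrib,
          Finset.sum_ite_eq' Finset.univ x (fun _ => (if τ x = a then 1 else 0)),
          Finset.sum_ite_eq' Finset.univ y (fun _ => (if τ y = a then 1 else 0))]
        simp
      rw [hsum2, Sym2.map_pair_eq]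
      by_cases hx : τ x = a <;> by_cases hy : τ y = a
      · have hd : (s(τ x, τ y)).IsDiag := Sym2.mk_isDiag_iff.mpr (hx.trans hy.symm)
        rw [if_neg (fun hcon => hcon.1 hd), if_pos hx, if_pos hy]
        decide
      · have hd : ¬(s(τ x, τ y)).IsDiag := fun h => hy ((Sym2.mk_isDiag_iff.mp h) ▸ hx)
        have hm : a ∈ s(τ x, τ y) := Sym2.mem_iff.mpr (Or.inl hx.symm)
        rw [if_pos ⟨hd, hm⟩, if_pos hx, if_neg hy]
        decide
      · have hd : ¬(s(τ x, τ y)).IsDiag := fun h => hx ((Sym2.mk_isDiag_iff.mp h).trans hy)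
        have hm : a ∈ s(τ x, τ y) := Sym2.mem_iff.mpr (Or.inr hy.symm)
        rw [if_pos ⟨hd, hm⟩, if_neg hx, if_pos hy]
        decide
      · have hm : a ∉ s(τ x, τ y) := fun h =>
          (Sym2.mem_iff.mp h).elim (fun h' => hx h'.symm) (fun h' => hy h'.symm)
        rw [if_neg (fun hcon => hm hcon.2), if_neg hx, if_neg hy]
        decide
  have hEvenH : Even (∑ e ∈ F, ∑ u : W, if τ u = a ∧ u ∈ e then 1 else 0) := by
    rw [Finset.sum_comm]
    refine Finset.even_sum _ fun u _ => ?_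
    have hinner : (∑ e ∈ F, if τ u = a ∧ u ∈ e then 1 else 0)
        = if τ u = a then (F.filter (fun e => u ∈ e)).card else 0 := by
      by_cases h : τ u = a
      · simp only [h, true_and, if_true]
        rw [Finset.card_filter]
      · simp [h]
    rw [hinner]
    by_cases h : τ u = a
    · simpa [h] using heven u
    · simp [h]
  have hEvenSum : Even ((∑ e ∈ F, (if ¬(Sym2.map τ e).IsDiag ∧ a ∈ Sym2.map τ e then 1 else 0))
      + (∑ e ∈ F, ∑ u : W, if τ u = a ∧ u ∈ e then 1 else 0)) := by
    rw [← Finset.sum_add_distrib]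
    exact Finset.even_sum _ key
  exact (Nat.even_add.mp hEvenSum).mpr hEvenH

end Parity

lemma exists_mem_of_mdeg_pos {W : Type} {E : Multiset (Sym2 W)} {a : W}
    (h : 0 < mdeg E a) : ∃ e ∈ E, a ∈ e := by
  by_contra hc
  push_neg at hc
  have hz : mdeg E a = 0 := by
    unfold mdeg
    rw [Multiset.sum_eq_zero]
    intro x hx
    rw [Multiset.mem_map] at hx
    obtain ⟨e, he, rfl⟩ := hx
    have hna := hc e he
    have hne : e ≠ Sym2.diag a := by
      intro hdiag
      rw [hdiag] at hna
      exact hna (Sym2.mem_iff.mpr (Or.inl rfl))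
    rw [if_neg hne, if_neg hna]
  omega

section MainLemma

variable {V : Type} [Fintype V]

lemma main_lemma (G : SimpleGraph V) (r : ℕ) (v : V) (F : Finset (Sym2 V))
    (hFsub : ↑F ⊆ G.edgeSet)
    (heven : ∀ w : V, Even ((F.filter (fun e => w ∈ e)).card))
    (hdeg : 2 * r ^ 2 ≤ (F.filter (fun e => v ∈ e)).card)
    (D : TCD G) (hW : D.slimWidth < r) : False := by
  obtain ⟨t, hvbag, _⟩ := D.partition v
  set Wd := D.slimWidth with hWd
  have hadh : ∀ c, D.adh c ≤ Wd := fun c =>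
    le_trans (le_max_left _ _)
      (Finset.le_sup (f := fun s => max (D.adh s) (D.tor2 s)) (Finset.mem_univ c))
  have htor : D.tor2 t ≤ Wd :=
    le_trans (le_max_right _ _)
      (Finset.le_sup (f := fun s => max (D.adh s) (D.tor2 s)) (Finset.mem_univ t))
  set τ : V → (V ⊕ D.Cmp t) := D.toTorso t with hτ
  set FE : Multiset (Sym2 (V ⊕ D.Cmp t)) :=
    (F.val.map (Sym2.map τ)).filter (fun e => ¬ e.IsDiag) with hFE2
  have hFnd : ∀ e ∈ F, ¬ e.IsDiag := fun e he =>
    G.not_isDiag_of_mem_edgeSet (hFsub he)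
  have hevenFE : ∀ a, Even (mdeg FE a) := by
    intro a
    have h := even_mdeg_FE τ F hFnd heven a
    rw [hFE2]
    convert h using 3
  have hle : FE ≤ D.torsoE t := by
    unfold TCD.torsoE
    refine Multiset.filter_le_filter _ (Multiset.map_le_map ?_)
    rw [Finset.val_le_iff]
    intro e he
    exact Finset.mem_filter.mpr ⟨Finset.mem_univ _, hFsub he⟩
  set A : Finset (V ⊕ D.Cmp t) := Finset.univ.filter (fun w => 0 < mdeg FE w) with hA
  have hA2 : ∀ a ∈ A, 2 ≤ mdeg FE a := by
    intro a ha
    have h1 : 0 < mdeg FE a := (Finset.mem_filter.mp ha).2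
    obtain ⟨k, hk⟩ := hevenFE a
    omega
  have hend : ∀ e ∈ FE, ∀ w ∈ e, w ∈ A ∨ w ∈ (D.bag t).image Sum.inl := fun e he w hw =>
    Or.inl (Finset.mem_filter.mpr ⟨Finset.mem_univ _, mdeg_pos_of_mem he hw⟩)
  have hAS : ∀ a ∈ A, a ∈ D.torsoS t := by
    intro a ha
    obtain ⟨e, he, hae⟩ := exists_mem_of_mdeg_pos (Finset.mem_filter.mp ha).2
    rw [hFE2, Multiset.mem_filter] at he
    obtain ⟨e₀, he₀, rfl⟩ := Multiset.mem_map.mp he.1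
    obtain ⟨u, hu, hτu⟩ := Sym2.mem_map.mp hae
    unfold TCD.torsoS
    cases a with
    | inl u' =>
      by_cases hub : u ∈ D.bag t
      · have h2 := toTorso_of_mem_bag hub
        rw [hτ, h2] at hτu
        have h3 : u = u' := Sum.inl.inj hτu
        subst h3
        exact Finset.mem_union_left _ (Finset.mem_image_of_mem _ hub)
      · obtain ⟨s, hs, hbs, heq⟩ := toTorso_of_not_mem_bag hub
        rw [hτ, heq] at hτu
        exact (Sum.inr_ne_inl hτu).elim
    | inr C =>
      exact Finset.mem_union_right _ (Finset.mem_image_of_mem _ (Finset.mem_univ C))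
  set Ainr : Finset (D.Cmp t) := Finset.univ.filter (fun C => 0 < mdeg FE (Sum.inr C))
    with hAinr
  -- survivors give the 2-center bound
  have hcard : (D.bag t).card + Ainr.card ≤ D.tor2 t := by
    set S1 : Finset (V ⊕ D.Cmp t) := (D.bag t).image Sum.inl ∪ Ainr.image Sum.inr with hS1
    have hS1sub : S1 ⊆ reduce ((D.bag t).image Sum.inl) 1 false (D.torsoS t) (D.torsoE t) := by
      intro w hw
      rcases Finset.mem_union.mp hw with hw | hw
      · refine reduce_keeps _ A FE hA2 hend _ _ hle w ?_ (Or.inr hw)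
        exact Finset.mem_union_left _ hw
      · obtain ⟨C, hC, rfl⟩ := Finset.mem_image.mp hw
        have hmem : Sum.inr C ∈ A :=
          Finset.mem_filter.mpr ⟨Finset.mem_univ _, (Finset.mem_filter.mp hC).2⟩
        exact reduce_keeps _ A FE hA2 hend _ _ hle _ (hAS _ hmem) (Or.inl hmem)
    have hdisj : Disjoint ((D.bag t).image Sum.inl) (Ainr.image Sum.inr) := by
      rw [Finset.disjoint_left]
      rintro w hw1 hw2
      obtain ⟨u, _, rfl⟩ := Finset.mem_image.mp hw1
      obtain ⟨C, _, hC⟩ := Finset.mem_image.mp hw2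
      exact Sum.inr_ne_inl hC
    have hcards : S1.card = (D.bag t).card + Ainr.card := by
      rw [hS1, Finset.card_union_of_disjoint hdisj,
        Finset.card_image_of_injective _ Sum.inl_injective,
        Finset.card_image_of_injective _ Sum.inr_injective]
    calc (D.bag t).card + Ainr.card = S1.card := hcards.symm
      _ ≤ _ := Finset.card_le_card hS1sub
      _ = D.tor2 t := rfl
  -- the counting at v
  set N : Finset (Sym2 V) := F.filter (fun e => v ∈ e) with hN
  set g : Sym2 V → (V ⊕ D.Cmp t) :=
    fun e => if h : v ∈ e then τ (Sym2.Mem.other h) else Sum.inl v with hg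
  have hedge : ∀ e ∈ N, e ∈ F ∧ ∃ h : v ∈ e, s(v, Sym2.Mem.other h) = e ∧
      Sym2.Mem.other h ≠ v ∧ g e = τ (Sym2.Mem.other h) := by
    intro e he
    obtain ⟨heF, hv⟩ := Finset.mem_filter.mp he
    exact ⟨heF, hv, Sym2.other_spec hv, Sym2.other_ne (hFnd e heF) hv, dif_pos hv⟩
  -- (a) inl fibers have at most one element
  have hfib_inl : ∀ u' : V, (N.filter (fun e => g e = Sum.inl u')).card ≤ 1 := by
    intro u'
    rw [Finset.card_le_one]
    intro e he e' he'
    obtain ⟨heN, hgw⟩ := Finset.mem_filter.mp he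
    obtain ⟨heN', hgw'⟩ := Finset.mem_filter.mp he'
    obtain ⟨_, hv, hspec, _, hge⟩ := hedge e heN
    obtain ⟨_, hv', hspec', _, hge'⟩ := hedge e' heN'
    have key : ∀ (f : Sym2 V) (hvf : v ∈ f), f ∈ N → g f = Sum.inl u' →
        f = s(v, u') := by
      intro f hvf hfN hgf
      obtain ⟨hfF, hvf2, hfspec, _, hgef⟩ := hedge f hfN
      rw [hgef] at hgf
      by_cases hub : Sym2.Mem.other hvf2 ∈ D.bag t
      · rw [hτ, toTorso_of_mem_bag hub] at hgf
        rw [← hfspec, Sum.inl.inj hgf]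
      · obtain ⟨s, hs, hbs, heq⟩ := toTorso_of_not_mem_bag hub
        rw [hτ, heq] at hgf
        exact (Sum.inr_ne_inl hgf).elim
    rw [key e hv heN hgw, key e' hv' heN' hgw']
  -- (b) inr fibers are bounded by adhesions
  have hfib_inr : ∀ C : D.Cmp t, (N.filter (fun e => g e = Sum.inr C)).card ≤ Wd := by
    intro C
    rcases class_eq t C with ⟨c, hiff, hbagnot⟩ | hiff
    · have hsub : N.filter (fun e => g e = Sum.inr C) ⊆
          Finset.univ.filter (fun e =>
            e ∈ G.edgeSet ∧ ∃ a b, e = s(a, b) ∧ a ∈ D.Y c ∧ b ∉ D.Y c) := by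
        intro e he
        obtain ⟨heN, hgw⟩ := Finset.mem_filter.mp he
        obtain ⟨heF, hv, hspec, _, hge⟩ := hedge e heN
        rw [hge] at hgw
        refine Finset.mem_filter.mpr ⟨Finset.mem_univ _, hFsub heF, Sym2.Mem.other hv, v,
          hspec.symm.trans Sym2.eq_swap, (hiff _).mp hgw, hbagnot v hvbag⟩
      calc (N.filter (fun e => g e = Sum.inr C)).card
          ≤ _ := Finset.card_le_card hsub
        _ = D.adh c := rfl
        _ ≤ Wd := hadh c
    · have hsub : N.filter (fun e => g e = Sum.inr C) ⊆
          Finset.univ.filter (fun e =>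
            e ∈ G.edgeSet ∧ ∃ a b, e = s(a, b) ∧ a ∈ D.Y t ∧ b ∉ D.Y t) := by
        intro e he
        obtain ⟨heN, hgw⟩ := Finset.mem_filter.mp he
        obtain ⟨heF, hv, hspec, _, hge⟩ := hedge e heN
        rw [hge] at hgw
        refine Finset.mem_filter.mpr ⟨Finset.mem_univ _, hFsub heF, v, Sym2.Mem.other hv,
          hspec.symm, (mem_Y_iff hvbag).mpr (mem_desc_self D t), (hiff _).mp hgw⟩
      calc (N.filter (fun e => g e = Sum.inr C)).card
          ≤ _ := Finset.card_le_card hsub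
        _ = D.adh t := rfl
        _ ≤ Wd := hadh t
  -- image of g is small
  have himg : N.image g ⊆ ((D.bag t).erase v).image Sum.inl ∪ Ainr.image Sum.inr := by
    intro w hw
    obtain ⟨e, heN, rfl⟩ := Finset.mem_image.mp hw
    obtain ⟨heF, hv, hspec, hne, hge⟩ := hedge e heN
    rw [hge]
    by_cases hub : Sym2.Mem.other hv ∈ D.bag t
    · rw [hτ, toTorso_of_mem_bag hub]
      exact Finset.mem_union_left _
        (Finset.mem_image_of_mem _ (Finset.mem_erase.mpr ⟨hne, hub⟩))
    · obtain ⟨s, hs, hbs, heq⟩ := toTorso_of_not_mem_bag hub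
      rw [hτ, heq]
      refine Finset.mem_union_right _ (Finset.mem_image_of_mem _ ?_)
      rw [hAinr]
      refine Finset.mem_filter.mpr ⟨Finset.mem_univ _, ?_⟩
      have hτv : τ v = Sum.inl v := by rw [hτ]; exact toTorso_of_mem_bag hvbag
      have hτu : τ (Sym2.Mem.other hv) = Sum.inr
          ((SimpleGraph.induce {s : Fin D.n | s ≠ t} D.T).connectedComponentMk ⟨s, hs⟩) := by
        rw [hτ]; exact heq
      have hmemFE : Sym2.map τ e ∈ FE := by
        rw [hFE2, Multiset.mem_filter]
        constructor
        · exact Multiset.mem_map_of_mem _ (by exact heF)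
        · rw [← hspec, Sym2.map_pair_eq, hτv, hτu]
          exact fun hh => Sum.inl_ne_inr (Sym2.mk_isDiag_iff.mp hh)
      have hin : (Sum.inr ((SimpleGraph.induce {s : Fin D.n | s ≠ t} D.T).connectedComponentMk
          ⟨s, hs⟩) : V ⊕ D.Cmp t) ∈ Sym2.map τ e := by
        rw [← hspec, Sym2.map_pair_eq, hτu]
        exact Sym2.mem_iff.mpr (Or.inr rfl)
      exact mdeg_pos_of_mem hmemFE hin
  -- assemble the count
  have hNcard : N.card = ∑ w ∈ N.image g, (N.filter (fun e => g e = w)).card :=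
    Finset.card_eq_sum_card_fiberwise (fun x hx => Finset.mem_image_of_mem g hx)
  set bnd : (V ⊕ D.Cmp t) → ℕ := Sum.elim (fun _ => 1) (fun _ => Wd) with hbnd
  have hpt : ∀ w ∈ N.image g, (N.filter (fun e => g e = w)).card ≤ bnd w := by
    rintro (u' | C) _
    · exact hfib_inl u'
    · exact hfib_inr C
  have hdisj2 : Disjoint (((D.bag t).erase v).image Sum.inl) (Ainr.image Sum.inr) := by
    rw [Finset.disjoint_left]
    rintro w hw1 hw2
    obtain ⟨u, _, rfl⟩ := Finset.mem_image.mp hw1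
    obtain ⟨C, _, hC⟩ := Finset.mem_image.mp hw2
    exact Sum.inr_ne_inl hC
  have hsum1 : ∑ w ∈ ((D.bag t).erase v).image (Sum.inl : V → V ⊕ D.Cmp t), bnd w
      = (((D.bag t).erase v).image (Sum.inl : V → V ⊕ D.Cmp t)).card := by
    rw [Finset.card_eq_sum_ones]
    refine Finset.sum_congr rfl ?_
    intro w hw
    obtain ⟨u, _, rfl⟩ := Finset.mem_image.mp hw
    rfl
  have hsum2 : ∑ w ∈ Ainr.image (Sum.inr : D.Cmp t → V ⊕ D.Cmp t), bnd w
      = (Ainr.image (Sum.inr : D.Cmp t → V ⊕ D.Cmp t)).card * Wd := by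
    have hconst : ∀ w ∈ Ainr.image (Sum.inr : D.Cmp t → V ⊕ D.Cmp t), bnd w = Wd := by
      intro w hw
      obtain ⟨C, _, rfl⟩ := Finset.mem_image.mp hw
      rfl
    rw [Finset.sum_congr rfl hconst, Finset.sum_const, smul_eq_mul]
  have hchain : N.card ≤ ((D.bag t).card - 1) + Ainr.card * Wd := by
    calc N.card = ∑ w ∈ N.image g, (N.filter (fun e => g e = w)).card := hNcard
      _ ≤ ∑ w ∈ N.image g, bnd w := Finset.sum_le_sum hpt
      _ ≤ ∑ w ∈ (((D.bag t).erase v).image Sum.inl ∪ Ainr.image Sum.inr), bnd w :=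
          Finset.sum_le_sum_of_subset_of_nonneg himg (fun _ _ _ => Nat.zero_le _)
      _ = _ := Finset.sum_union hdisj2
      _ ≤ ((D.bag t).card - 1) + Ainr.card * Wd := by
          rw [hsum1, hsum2]
          refine Nat.add_le_add ?_ (Nat.mul_le_mul_right _ Finset.card_image_le)
          calc (((D.bag t).erase v).image Sum.inl).card
              ≤ ((D.bag t).erase v).card := Finset.card_image_le
            _ = (D.bag t).card - 1 := Finset.card_erase_of_mem hvbag
  have hB1 : 1 ≤ (D.bag t).card := Finset.card_pos.mpr ⟨v, hvbag⟩
  have hdeg' : 2 * (r * r) ≤ N.card := by rw [← pow_two]; exact hdeg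
  have hBK : (D.bag t).card + Ainr.card ≤ Wd := le_trans hcard htor
  set B := (D.bag t).card with hB
  set K := Ainr.card with hK
  have e1 : N.card < (K + 1) * (Wd + 1) := by
    have t1 : B - 1 + K * Wd < (K + 1) * (Wd + 1) :=
      calc B - 1 + K * Wd < (Wd + 1) + K * Wd := Nat.add_lt_add_right (by omega) _
        _ = K * Wd + (Wd + 1) := by ring
        _ ≤ K * Wd + (K + Wd + 1) := Nat.add_le_add_left (by omega) _
        _ = (K + 1) * (Wd + 1) := by ring
    exact lt_of_le_of_lt hchain t1
  have e2 : (K + 1) * (Wd + 1) ≤ r * r := Nat.mul_le_mul (by omega) (by omega)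
  have hfin : 2 * (r * r) < r * r := lt_of_le_of_lt hdeg' (lt_of_lt_of_le e1 e2)
  have hge : r * r ≤ 2 * (r * r) := Nat.le_mul_of_pos_left _ (by norm_num)
  exact Nat.lt_irrefl _ (lt_of_le_of_lt hge hfin)

end MainLemma

lemma filter_irrel {α : Type} {p : α → Prop} {i1 i2 : DecidablePred p} {s : Finset α} :
    @Finset.filter α p i1 s = @Finset.filter α p i2 s := by
  have h : i1 = i2 := by
    funext a
    exact Subsingleton.elim _ _
  subst h
  rfl

/-! ### The immersion invariant: an even edge set with a high-degree vertex -/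

/-- There is a set of edges inducing even degrees everywhere and degree at least `2m`
at some vertex. -/
def goodF (m : ℕ) (A : FG) : Prop :=
  ∃ (v : A.V) (F : Finset (Sym2 A.V)), ↑F ⊆ A.G.edgeSet ∧
    (∀ w : A.V, Even ((F.filter (fun e => w ∈ e)).card)) ∧
    2 * m ≤ (F.filter (fun e => v ∈ e)).card

lemma goodF_of_flower {m : ℕ} {A : FG} (h : IsFlower m A.G) : goodF m A := by
  obtain ⟨-, c, hdeg, hother⟩ := h
  have hcard : ∀ w : A.V,
      ((Finset.univ.filter (fun e => e ∈ A.G.edgeSet)).filter (fun e => w ∈ e)).card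
        = A.G.degree w := by
    intro w
    rw [← SimpleGraph.card_incidenceFinset_eq_degree]
    congr 1
    ext e
    simp [SimpleGraph.incidenceFinset, SimpleGraph.incidenceSet, Set.mem_toFinset, and_comm]
    exact ⟨fun h => (SimpleGraph.mem_incidenceFinset (G := A.G) (v := w) e).mpr ⟨h.2, h.1⟩, fun h => (fun h' => ⟨h'.2, h'.1⟩) ((SimpleGraph.mem_incidenceFinset (G := A.G) (v := w) e).mp h)⟩
  refine ⟨c, Finset.univ.filter (fun e => e ∈ A.G.edgeSet), ?_, ?_, ?_⟩
  · intro e he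
    exact (Finset.mem_filter.mp he).2
  · intro w
    rw [hcard w]
    by_cases hw : w = c
    · subst hw; rw [hdeg]; exact ⟨m, by ring⟩
    · rw [hother w hw]; exact ⟨1, rfl⟩
  · rw [hcard c, hdeg]

lemma goodF_step {m : ℕ} {B A : FG} (h : ImmStep B A) (hg : goodF m B) : goodF m A := by
  obtain ⟨v, F, hFsub, heven, hdeg⟩ := hg
  cases h with
  | iso AA BB hne =>
    obtain ⟨φ⟩ := hne
    have hinj : Function.Injective ⇑φ := φ.injective
    have hkey : ∀ w : A.V,
        ((F.image (Sym2.map ⇑φ)).filter (fun e => w ∈ e)).card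
          = ((F.filter (fun e => φ.symm w ∈ e))).card := by
      intro w
      rw [Finset.filter_image]
      rw [Finset.card_image_of_injective _ (Sym2.map.injective hinj)]
      congr 1
      apply Finset.filter_congr
      intro e _
      constructor
      · intro hmem
        obtain ⟨a, ha, rfl⟩ := Sym2.mem_map.mp hmem
        rwa [φ.symm_apply_apply]
      · intro hmem
        exact Sym2.mem_map.mpr ⟨φ.symm w, hmem, φ.apply_symm_apply w⟩
    refine ⟨φ v, F.image (Sym2.map ⇑φ), ?_, ?_, ?_⟩
    · intro e he
      obtain ⟨e₀, he₀, rfl⟩ := Finset.mem_image.mp he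
      exact (φ.map_mem_edgeSet_iff).mpr (hFsub he₀)
    · intro w
      rw [hkey w]
      exact heven _
    · rw [hkey (φ v), φ.symm_apply_apply]
      exact hdeg
  | delEdge AA e₀ he₀ =>
    refine ⟨v, F, ?_, heven, hdeg⟩
    intro e he
    have := hFsub he
    rw [SimpleGraph.edgeSet_deleteEdges] at this
    exact this.1
  | delVertex AA v₀ =>
    have hinj : Function.Injective (Subtype.val : {w : A.V // w ≠ v₀} → A.V) :=
      Subtype.val_injective
    have hkey : ∀ (w : A.V) (hw : w ≠ v₀),
        ((F.image (Sym2.map Subtype.val)).filter (fun e => w ∈ e)).card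
          = ((F.filter (fun e => (⟨w, hw⟩ : {u : A.V // u ≠ v₀}) ∈ e))).card := by
      intro w hw
      rw [Finset.filter_image]
      rw [Finset.card_image_of_injective _ (Sym2.map.injective hinj)]
      congr 1
      apply Finset.filter_congr
      intro e _
      constructor
      · intro hmem
        obtain ⟨a, ha, hval⟩ := Sym2.mem_map.mp hmem
        have : a = ⟨w, hw⟩ := Subtype.ext hval
        rwa [← this]
      · intro hmem
        exact Sym2.mem_map.mpr ⟨⟨w, hw⟩, hmem, rfl⟩
    have hzero : ((F.image (Sym2.map Subtype.val)).filter (fun e => v₀ ∈ e)).card = 0 := by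
      rw [Finset.card_eq_zero, Finset.filter_eq_empty_iff]
      intro e he
      obtain ⟨e₀, _, rfl⟩ := Finset.mem_image.mp he
      intro hmem
      obtain ⟨a, _, hval⟩ := Sym2.mem_map.mp hmem
      exact a.2 hval
    refine ⟨v.val, F.image (Sym2.map Subtype.val), ?_, ?_, ?_⟩
    · intro e he
      obtain ⟨e₀, he₀, rfl⟩ := Finset.mem_image.mp he
      have he₀' := hFsub he₀
      revert he₀'
      induction e₀ using Sym2.inductionOn with
      | _ a b =>
        intro he₀'
        rw [Sym2.map_pair_eq]
        rw [SimpleGraph.mem_edgeSet] at he₀' ⊢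
        exact he₀'
    · intro w
      by_cases hw : w = v₀
      · subst hw; rw [hzero]; exact ⟨0, rfl⟩
      · rw [hkey w hw]
        convert heven ⟨w, hw⟩ using 2
        exact filter_irrel
    · rw [hkey v.val v.2]
      convert hdeg using 2
      exact filter_irrel
  | lift AA x y z hxy hyz hxz =>
    have hEB := SimpleGraph.edgeSet_fromEdgeSet ((A.G.edgeSet \ {s(x, y), s(y, z)}) ∪ {s(x, z)})
    have h1 : s(x, y) ≠ s(x, z) := by
      intro hcon
      rcases Sym2.eq_iff.mp hcon with ⟨-, h'⟩ | ⟨h', -⟩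
      · exact hyz.ne h'
      · exact hxz h'
    have h2 : s(y, z) ≠ s(x, z) := by
      intro hcon
      rcases Sym2.eq_iff.mp hcon with ⟨h', -⟩ | ⟨-, h'⟩
      · exact hxy.ne h'.symm
      · exact hxz h'.symm
    have h3 : s(x, y) ≠ s(y, z) := by
      intro hcon
      rcases Sym2.eq_iff.mp hcon with ⟨h', -⟩ | ⟨h', -⟩
      · exact hxy.ne h'
      · exact hxz h'
    have hmemE : ∀ e ∈ F, e ∈ ((A.G.edgeSet \ {s(x, y), s(y, z)}) ∪ {s(x, z)}) := by
      intro e he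
      have := hFsub he
      rw [hEB] at this
      exact this.1
    have hxyF : s(x, y) ∉ F := by
      intro hmem
      rcases hmemE _ hmem with h' | h'
      · exact h'.2 (Or.inl rfl)
      · exact h1 h'
    have hyzF : s(y, z) ∉ F := by
      intro hmem
      rcases hmemE _ hmem with h' | h'
      · exact h'.2 (Or.inr rfl)
      · exact h2 h'
    have cardA : ∀ (a : Sym2 A.V) (s : Finset (Sym2 A.V)), a ∉ s → ∀ w : A.V,
        ((insert a s).filter (fun e => w ∈ e)).card
          = (if w ∈ a then 1 else 0) + (s.filter (fun e => w ∈ e)).card := by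
      intro a s ha w
      rw [Finset.filter_insert]
      by_cases h : w ∈ a
      · rw [if_pos h, if_pos h,
          Finset.card_insert_of_notMem (fun hc => ha (Finset.mem_of_mem_filter _ hc))]
        omega
      · rw [if_neg h, if_neg h]
        omega
    by_cases hxzF : s(x, z) ∈ F
    · have cardErase : ∀ w : A.V, (F.filter (fun e => w ∈ e)).card
          = (if w ∈ s(x, z) then 1 else 0) + ((F.erase s(x, z)).filter (fun e => w ∈ e)).card := by
        intro w
        conv_lhs => rw [← Finset.insert_erase hxzF]
        exact cardA _ _ (Finset.notMem_erase _ _) w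
      have hyz_notin : s(y, z) ∉ F.erase s(x, z) :=
        fun hc => hyzF (Finset.mem_of_mem_erase hc)
      have hxy_notin : s(x, y) ∉ insert s(y, z) (F.erase s(x, z)) := by
        intro hc
        rcases Finset.mem_insert.mp hc with h' | h'
        · exact h3 h'
        · exact hxyF (Finset.mem_of_mem_erase h')
      have cardNew : ∀ w : A.V,
          ((insert s(x, y) (insert s(y, z) (F.erase s(x, z)))).filter (fun e => w ∈ e)).card
            = (if w ∈ s(x, y) then 1 else 0) + ((if w ∈ s(y, z) then 1 else 0)
              + ((F.erase s(x, z)).filter (fun e => w ∈ e)).card) := by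
        intro w
        rw [cardA _ _ hxy_notin w, cardA _ _ hyz_notin w]
      refine ⟨v, insert s(x, y) (insert s(y, z) (F.erase s(x, z))), ?_, ?_, ?_⟩
      · intro e he
        rcases Finset.mem_insert.mp he with h' | h'
        · exact h' ▸ hxy
        · rcases Finset.mem_insert.mp h' with h'' | h''
          · exact h'' ▸ hyz
          · obtain ⟨hne_xz, heF⟩ := Finset.mem_erase.mp h''
            rcases hmemE _ heF with h''' | h'''
            · exact h'''.1
            · exact absurd h''' hne_xz
      · have mx_xy : x ∈ s(x, y) := Sym2.mem_iff.mpr (Or.inl rfl)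
        have my_xy : y ∈ s(x, y) := Sym2.mem_iff.mpr (Or.inr rfl)
        have my_yz : y ∈ s(y, z) := Sym2.mem_iff.mpr (Or.inl rfl)
        have mz_yz : z ∈ s(y, z) := Sym2.mem_iff.mpr (Or.inr rfl)
        have mx_xz : x ∈ s(x, z) := Sym2.mem_iff.mpr (Or.inl rfl)
        have mz_xz : z ∈ s(x, z) := Sym2.mem_iff.mpr (Or.inr rfl)
        have nx_yz : x ∉ s(y, z) := fun hm => (Sym2.mem_iff.mp hm).elim (fun h' => hxy.ne h') hxz
        have nz_xy : z ∉ s(x, y) := fun hm =>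
          (Sym2.mem_iff.mp hm).elim (fun h' => hxz h'.symm) (fun h' => hyz.ne h'.symm)
        have ny_xz : y ∉ s(x, z) := fun hm =>
          (Sym2.mem_iff.mp hm).elim (fun h' => hxy.ne h'.symm) (fun h' => hyz.ne h')
        intro w
        have h0 := heven w
        rw [cardErase w] at h0
        rw [cardNew w]
        rw [Nat.even_iff] at h0 ⊢
        by_cases hwx : w = x
        · subst hwx
          rw [if_pos mx_xy, if_neg nx_yz]
          rw [if_pos mx_xz] at h0
          omega
        · by_cases hwy : w = y
          · subst hwy
            rw [if_pos my_xy, if_pos my_yz]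
            rw [if_neg ny_xz] at h0
            omega
          · by_cases hwz : w = z
            · subst hwz
              rw [if_neg nz_xy, if_pos mz_yz]
              rw [if_pos mz_xz] at h0
              omega
            · have nw1 : w ∉ s(x, y) := fun hm => (Sym2.mem_iff.mp hm).elim hwx hwy
              have nw2 : w ∉ s(y, z) := fun hm => (Sym2.mem_iff.mp hm).elim hwy hwz
              have nw3 : w ∉ s(x, z) := fun hm => (Sym2.mem_iff.mp hm).elim hwx hwz
              rw [if_neg nw1, if_neg nw2]
              rw [if_neg nw3] at h0
              omega
      · have mx_xy : x ∈ s(x, y) := Sym2.mem_iff.mpr (Or.inl rfl)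
        have my_xy : y ∈ s(x, y) := Sym2.mem_iff.mpr (Or.inr rfl)
        have my_yz : y ∈ s(y, z) := Sym2.mem_iff.mpr (Or.inl rfl)
        have mz_yz : z ∈ s(y, z) := Sym2.mem_iff.mpr (Or.inr rfl)
        have mx_xz : x ∈ s(x, z) := Sym2.mem_iff.mpr (Or.inl rfl)
        have mz_xz : z ∈ s(x, z) := Sym2.mem_iff.mpr (Or.inr rfl)
        have nx_yz : x ∉ s(y, z) := fun hm => (Sym2.mem_iff.mp hm).elim (fun h' => hxy.ne h') hxz
        have nz_xy : z ∉ s(x, y) := fun hm =>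
          (Sym2.mem_iff.mp hm).elim (fun h' => hxz h'.symm) (fun h' => hyz.ne h'.symm)
        have ny_xz : y ∉ s(x, z) := fun hm =>
          (Sym2.mem_iff.mp hm).elim (fun h' => hxy.ne h'.symm) (fun h' => hyz.ne h')
        have h0 := hdeg
        rw [cardErase v] at h0
        rw [cardNew v]
        by_cases hwx : v = x
        · have e1 : v ∈ s(x, y) := by rw [hwx]; exact mx_xy
          have e2 : v ∉ s(y, z) := by rw [hwx]; exact nx_yz
          have e3 : v ∈ s(x, z) := by rw [hwx]; exact mx_xz
          rw [if_pos e1, if_neg e2]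
          rw [if_pos e3] at h0
          omega
        · by_cases hwy : v = y
          · have e1 : v ∈ s(x, y) := by rw [hwy]; exact my_xy
            have e2 : v ∈ s(y, z) := by rw [hwy]; exact my_yz
            have e3 : v ∉ s(x, z) := by rw [hwy]; exact ny_xz
            rw [if_pos e1, if_pos e2]
            rw [if_neg e3] at h0
            omega
          · by_cases hwz : v = z
            · have e1 : v ∉ s(x, y) := by rw [hwz]; exact nz_xy
              have e2 : v ∈ s(y, z) := by rw [hwz]; exact mz_yz
              have e3 : v ∈ s(x, z) := by rw [hwz]; exact mz_xz
              rw [if_neg e1, if_pos e2]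
              rw [if_pos e3] at h0
              omega
            · have nw1 : v ∉ s(x, y) := fun hm => (Sym2.mem_iff.mp hm).elim hwx hwy
              have nw2 : v ∉ s(y, z) := fun hm => (Sym2.mem_iff.mp hm).elim hwy hwz
              have nw3 : v ∉ s(x, z) := fun hm => (Sym2.mem_iff.mp hm).elim hwx hwz
              rw [if_neg nw1, if_neg nw2]
              rw [if_neg nw3] at h0
              omega
    · refine ⟨v, F, ?_, heven, hdeg⟩
      intro e he
      rcases hmemE _ he with h' | h'
      · exact h'.1
      · exact absurd (h' ▸ he) hxzF

lemma goodF_of_immersion {m : ℕ} {H X : FG} (h : Immersion H X) (hg : goodF m H) :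
    goodF m X := by
  unfold Immersion at h
  induction h with
  | refl => exact hg
  | tail _ hrel ih => exact goodF_step hrel ih

/-- The one-node tree-cut decomposition. -/
def trivTCD (V : Type) [Fintype V] (G : SimpleGraph V) : TCD G where
  n := 1
  T := ⊥
  tree := by
    constructor
    · exact ⟨fun u w => (Subsingleton.elim u w) ▸ SimpleGraph.Reachable.refl u⟩
    · intro v p hp
      cases p with
      | nil => exact hp.ne_nil rfl
      | cons h _ => exact h.elim
  root := 0
  bag := fun _ => Finset.univ
  partition := fun v => ⟨0, Finset.mem_univ v, fun s _ => Subsingleton.elim s 0⟩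

/-- if `stcw(G) < r` then `G` does not contain as a weak immersion `r²`
cycles intersecting at one vertex which are otherwise pairwise vertex-disjoint. -/
theorem stmt6 {V : Type} [Fintype V] (G : SimpleGraph V) (r : ℕ) (h : stcw G < r) :
    ¬ ∃ H : FG, IsFlower (r ^ 2) H.G ∧ Immersion H (FG.mk V G) := by
  rintro ⟨H, hFl, hImm⟩
  obtain ⟨v, F, h1, h2, h3⟩ := goodF_of_immersion hImm (goodF_of_flower hFl)
  have hne : {k | ∃ D : TCD G, D.slimWidth ≤ k}.Nonempty :=
    ⟨(trivTCD V G).slimWidth, trivTCD V G, le_rfl⟩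
  obtain ⟨D, hD⟩ := Nat.sInf_mem hne
  exact main_lemma G r v F h1 h2 h3 D (lt_of_le_of_lt hD h)
end PaperSTCW
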